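/- arXiv:1701.03974 — 2 statements merged into one kernel-verified Lean document; each statement's English description precedes it below -/
import Mathlib

section
/- Theorem 1 (dynamic-fit bound): Under the MOSP setting with ε > V̄ and λ_1 = 0, the dynamic fit satisfies Fit_T := ‖[Σ_{t=1}^T g_t(x_t)]^+‖ ≤ M + (2·G·R/μ + R²/(2·α·μ) + M²/2)/(ε − V̄). -/
open scoped RealInnerProductSpace
open Finset

/-- Entrywise positive projection on `ℝ^m`. -/
noncomputable def posProj {m : ℕ} (v : EuclideanSpace ℝ (Fin m)) :
    EuclideanSpace ℝ (Fin m) := WithLp.toLp 2 (fun i => max (v i) 0)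

section Aux

variable {m : ℕ}

lemma posProj_apply (v : EuclideanSpace ℝ (Fin m)) (i : Fin m) :
    posProj v i = max (v i) 0 := rfl

lemma norm_le_of_abs_le {u v : EuclideanSpace ℝ (Fin m)} (h : ∀ i, |u i| ≤ |v i|) :
    ‖u‖ ≤ ‖v‖ := by
  rw [EuclideanSpace.norm_eq, EuclideanSpace.norm_eq]
  apply Real.sqrt_le_sqrt
  apply Finset.sum_le_sum
  intro i _
  simp only [Real.norm_eq_abs]
  exact pow_le_pow_left₀ (abs_nonneg _) (h i) 2

lemma norm_posProj_le (v : EuclideanSpace ℝ (Fin m)) : ‖posProj v‖ ≤ ‖v‖ := by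
  apply norm_le_of_abs_le
  intro i
  rw [posProj_apply, abs_of_nonneg (le_max_right _ _ : (0:ℝ) ≤ max (v i) 0)]
  exact max_le (le_abs_self _) (abs_nonneg _)

lemma norm_posProj_le_of_le {v w : EuclideanSpace ℝ (Fin m)} (hw : ∀ i, 0 ≤ w i)
    (h : ∀ i, v i ≤ w i) : ‖posProj v‖ ≤ ‖w‖ := by
  apply norm_le_of_abs_le
  intro i
  rw [posProj_apply, abs_of_nonneg (le_max_right _ _ : (0:ℝ) ≤ max (v i) 0),
    abs_of_nonneg (hw i)]
  exact max_le (h i) (hw i)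

lemma norm_le_sum_of_nonneg {v : EuclideanSpace ℝ (Fin m)} (h : ∀ i, 0 ≤ v i) :
    ‖v‖ ≤ ∑ i, v i := by
  rw [EuclideanSpace.norm_eq]
  rw [show (∑ i, v i) = Real.sqrt ((∑ i, v i)^2) from
    (Real.sqrt_sq (Finset.sum_nonneg fun i _ => h i)).symm]
  apply Real.sqrt_le_sqrt
  calc ∑ i, ‖v i‖^2 = ∑ i, v i * v i := by
        simp [Real.norm_eq_abs, sq_abs, sq]
    _ ≤ (∑ i, v i)^2 := by
        rw [sq, Finset.sum_mul_sum]
        apply Finset.sum_le_sum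
        intro i _
        calc v i * v i = ∑ j ∈ {i}, v i * v j := by simp
          _ ≤ ∑ j, v i * v j := Finset.sum_le_sum_of_subset_of_nonneg (Finset.subset_univ _)
              (fun j _ _ => mul_nonneg (h i) (h j))

lemma inner_eucl (u v : EuclideanSpace ℝ (Fin m)) : ⟪u, v⟫ = ∑ i, u i * v i := by
  simp [PiLp.inner_apply, RCLike.inner_apply]
  exact Finset.sum_congr rfl fun i _ => mul_comm _ _

end Aux

/-- Theorem 1 (dynamic-fit bound) for the MOSP recursion. -/
theorem mosp_dynamic_fit_bound {n m : ℕ} (hm : 0 < m)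
    (T : ℕ) (hT : 1 ≤ T)
    (X : Set (EuclideanSpace ℝ (Fin n))) (hXne : X.Nonempty) (hXconv : Convex ℝ X)
    (R G M ε Vbar α μ : ℝ)
    (hR : ∀ x ∈ X, ∀ y ∈ X, ‖x - y‖ ≤ R)
    (f : ℕ → EuclideanSpace ℝ (Fin n) → ℝ)
    (hfconv : ∀ t, ConvexOn ℝ Set.univ (f t))
    (hfdiff : ∀ t, Differentiable ℝ (f t))
    (hG : ∀ t, ∀ x ∈ X, ‖gradient (f t) x‖ ≤ G)
    (g : ℕ → EuclideanSpace ℝ (Fin n) → EuclideanSpace ℝ (Fin m))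
    (hgconv : ∀ t i, ConvexOn ℝ Set.univ fun x => g t x i)
    (hM : ∀ t, ∀ x ∈ X, ‖g t x‖ ≤ M)
    (hε : 0 < ε)
    (hSlater : ∃ xt ∈ X, ∀ t, ∀ i, g t xt i ≤ -ε)
    (hVbar : 0 ≤ Vbar)
    (hvar : ∀ t, ∀ x ∈ X, ‖posProj (g (t + 1) x - g t x)‖ ≤ Vbar)
    (hεV : Vbar < ε)
    (hα : 0 < α) (hμ : 0 < μ)
    (x : ℕ → EuclideanSpace ℝ (Fin n))
    (lam : ℕ → EuclideanSpace ℝ (Fin m))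
    (hx0 : x 0 ∈ X) (hlam1 : lam 1 = 0)
    (hprimal : ∀ t, 1 ≤ t → x t ∈ X ∧ ∀ z ∈ X,
      ⟪gradient (f (t - 1)) (x (t - 1)), x t - x (t - 1)⟫ + ⟪lam t, g (t - 1) (x t)⟫ +
          ‖x t - x (t - 1)‖ ^ 2 / (2 * α) ≤
        ⟪gradient (f (t - 1)) (x (t - 1)), z - x (t - 1)⟫ + ⟪lam t, g (t - 1) z⟫ +
          ‖z - x (t - 1)‖ ^ 2 / (2 * α))
    (hdual : ∀ t, 1 ≤ t → lam (t + 1) = posProj (lam t + μ • g t (x t))) :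
    ‖posProj (∑ t ∈ Icc 1 T, g t (x t))‖ ≤
      M + (2 * G * R / μ + R ^ 2 / (2 * α * μ) + M ^ 2 / 2) / (ε - Vbar) := by
  obtain ⟨xt, hxtX, hxt⟩ := hSlater
  have hR0 : 0 ≤ R := le_trans (norm_nonneg _) (hR _ hx0 _ hx0)
  have hG0 : 0 ≤ G := le_trans (norm_nonneg _) (hG 0 _ hx0)
  have hM0 : 0 ≤ M := le_trans (norm_nonneg _) (hM 0 _ hx0)
  have hεV' : 0 < ε - Vbar := by linarith
  obtain ⟨B, hB⟩ : ∃ B : ℝ, B = (2 * G * R + R ^ 2 / (2 * α) + μ * M ^ 2 / 2) / (ε - Vbar) :=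
    ⟨_, rfl⟩
  have hB0 : 0 ≤ B := by
    rw [hB]
    apply div_nonneg _ hεV'.le
    have h1 : 0 ≤ 2 * G * R := by positivity
    have h2 : 0 ≤ R ^ 2 / (2 * α) := by positivity
    have h3 : 0 ≤ μ * M ^ 2 / 2 := by positivity
    linarith
  have hxX : ∀ t, x t ∈ X := by
    intro t
    rcases Nat.eq_zero_or_pos t with h | h
    · rw [h]; exact hx0
    · exact (hprimal t h).1
  -- lambda is entrywise nonnegative
  have hlamnn : ∀ t, 1 ≤ t → ∀ i, 0 ≤ lam t i := by
    intro t ht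
    match t, ht with
    | 1, _ => rw [hlam1]; intro i; simp
    | (s+2), _ =>
      rw [hdual (s+1) (by omega)]
      intro i
      rw [posProj_apply]
      exact le_max_right _ _
  -- key inner-product bound
  have hkey : ∀ s : ℕ, ⟪lam (s+1), g (s+1) (x (s+1))⟫ ≤
      G * R + R ^ 2 / (2 * α) - (ε - Vbar) * ‖lam (s+1)‖ := by
    intro s
    have hp := (hprimal (s+1) (by omega)).2 xt hxtX
    simp only [Nat.add_sub_cancel] at hp
    have h1 : ⟪gradient (f s) (x s), xt - x s⟫ - ⟪gradient (f s) (x s), x (s+1) - x s⟫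
        = ⟪gradient (f s) (x s), xt - x (s+1)⟫ := by
      rw [← inner_sub_right]
      congr 1
      abel
    have h2 : ⟪gradient (f s) (x s), xt - x (s+1)⟫ ≤ G * R := by
      calc ⟪gradient (f s) (x s), xt - x (s+1)⟫
          ≤ ‖gradient (f s) (x s)‖ * ‖xt - x (s+1)‖ := real_inner_le_norm _ _
        _ ≤ G * R := mul_le_mul (hG s _ (hxX s)) (hR _ hxtX _ (hxX (s+1)))
            (norm_nonneg _) hG0
    have hnn := hlamnn (s+1) (by omega)
    have h4 : ‖lam (s+1)‖ ≤ ∑ i, lam (s+1) i := norm_le_sum_of_nonneg hnn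
    have h3 : ⟪lam (s+1), g s xt⟫ ≤ -(ε * ‖lam (s+1)‖) := by
      rw [inner_eucl]
      have hs : ∑ i, lam (s+1) i * g s xt i ≤ ∑ i, lam (s+1) i * (-ε) :=
        Finset.sum_le_sum fun i _ => mul_le_mul_of_nonneg_left (hxt s i) (hnn i)
      have he : ∑ i, lam (s+1) i * (-ε) = -(ε * ∑ i, lam (s+1) i) := by
        rw [← Finset.sum_mul]; ring
      rw [he] at hs
      have h4' := mul_le_mul_of_nonneg_left h4 hε.le
      linarith
    have h5 : ‖xt - x s‖ ^ 2 / (2 * α) ≤ R ^ 2 / (2 * α) := by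
      have h5a : ‖xt - x s‖ ^ 2 ≤ R ^ 2 :=
        pow_le_pow_left₀ (norm_nonneg _) (hR _ hxtX _ (hxX s)) 2
      exact div_le_div_of_nonneg_right h5a (by positivity)
    have h6 : (0:ℝ) ≤ ‖x (s+1) - x s‖ ^ 2 / (2 * α) := by positivity
    have h7 : ⟪lam (s+1), g (s+1) (x (s+1)) - g s (x (s+1))⟫ ≤ Vbar * ‖lam (s+1)‖ := by
      calc ⟪lam (s+1), g (s+1) (x (s+1)) - g s (x (s+1))⟫
          ≤ ⟪lam (s+1), posProj (g (s+1) (x (s+1)) - g s (x (s+1)))⟫ := by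
            rw [inner_eucl, inner_eucl]
            apply Finset.sum_le_sum
            intro i _
            apply mul_le_mul_of_nonneg_left _ (hnn i)
            rw [posProj_apply]
            exact le_max_left _ _
        _ ≤ ‖lam (s+1)‖ * ‖posProj (g (s+1) (x (s+1)) - g s (x (s+1)))‖ :=
            real_inner_le_norm _ _
        _ ≤ ‖lam (s+1)‖ * Vbar :=
            mul_le_mul_of_nonneg_left (hvar s _ (hxX (s+1))) (norm_nonneg _)
        _ = Vbar * ‖lam (s+1)‖ := mul_comm _ _
    have h8 : ⟪lam (s+1), g (s+1) (x (s+1))⟫ = ⟪lam (s+1), g s (x (s+1))⟫ +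
        ⟪lam (s+1), g (s+1) (x (s+1)) - g s (x (s+1))⟫ := by
      rw [← inner_add_right]
      congr 1
      abel
    linarith [hp, h1, h2, h3, h5, h6, h7, h8]
  -- drift bound
  have hdrift : ∀ s : ℕ, ‖lam (s+2)‖ ^ 2 ≤ ‖lam (s+1)‖ ^ 2
      + 2 * μ * (G * R + R ^ 2 / (2 * α)) - 2 * μ * (ε - Vbar) * ‖lam (s+1)‖
      + μ ^ 2 * M ^ 2 := by
    intro s
    have hd := hdual (s+1) (by omega)
    have hn : ‖lam (s+2)‖ ≤ ‖lam (s+1) + μ • g (s+1) (x (s+1))‖ := by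
      rw [hd]; exact norm_posProj_le _
    have hsq : ‖lam (s+1) + μ • g (s+1) (x (s+1))‖ ^ 2 = ‖lam (s+1)‖ ^ 2
        + 2 * (μ * ⟪lam (s+1), g (s+1) (x (s+1))⟫)
        + μ ^ 2 * ‖g (s+1) (x (s+1))‖ ^ 2 := by
      rw [norm_add_sq_real, real_inner_smul_right, norm_smul, Real.norm_eq_abs,
        abs_of_pos hμ, mul_pow]
    have hgM : ‖g (s+1) (x (s+1))‖ ≤ M := hM _ _ (hxX _)
    have hn2 := pow_le_pow_left₀ (norm_nonneg _) hn 2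
    have hg2 := pow_le_pow_left₀ (norm_nonneg _) hgM 2
    have e1 : μ * ⟪lam (s+1), g (s+1) (x (s+1))⟫ ≤
        μ * (G * R + R ^ 2 / (2 * α) - (ε - Vbar) * ‖lam (s+1)‖) :=
      mul_le_mul_of_nonneg_left (hkey s) hμ.le
    have e2 : μ ^ 2 * ‖g (s+1) (x (s+1))‖ ^ 2 ≤ μ ^ 2 * M ^ 2 :=
      mul_le_mul_of_nonneg_left hg2 (sq_nonneg μ)
    linarith [hn2, hsq, e1, e2]
  -- per-step norm increment
  have hstep : ∀ s : ℕ, ‖lam (s+2)‖ ≤ ‖lam (s+1)‖ + μ * M := by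
    intro s
    rw [hdual (s+1) (by omega)]
    calc ‖posProj (lam (s+1) + μ • g (s+1) (x (s+1)))‖
        ≤ ‖lam (s+1) + μ • g (s+1) (x (s+1))‖ := norm_posProj_le _
      _ ≤ ‖lam (s+1)‖ + ‖μ • g (s+1) (x (s+1))‖ := norm_add_le _ _
      _ ≤ ‖lam (s+1)‖ + μ * M := by
          rw [norm_smul, Real.norm_eq_abs, abs_of_pos hμ]
          have := mul_le_mul_of_nonneg_left (hM (s+1) _ (hxX (s+1))) hμ.le
          linarith
  have hBe : (ε - Vbar) * B = 2 * G * R + R ^ 2 / (2 * α) + μ * M ^ 2 / 2 := by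
    rw [hB]
    field_simp
  -- uniform bound on lambda
  have hbound : ∀ t, 1 ≤ t → ‖lam t‖ ≤ μ * M + B := by
    intro t ht
    induction t with
    | zero => omega
    | succ s ih =>
      rcases Nat.eq_zero_or_pos s with h | h
      · subst h
        rw [hlam1]
        simp only [norm_zero]
        have := mul_nonneg hμ.le hM0
        linarith
      · have ihs := ih h
        obtain ⟨s', rfl⟩ : ∃ s', s = s' + 1 := ⟨s - 1, by omega⟩
        rcases le_or_gt ‖lam (s'+1)‖ B with hle | hlt
        · have := hstep s'
          linarith
        · have hdr := hdrift s'
          have hsq2 : ‖lam (s'+2)‖ ^ 2 ≤ ‖lam (s'+1)‖ ^ 2 := by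
            have hmul : 2 * μ * (ε - Vbar) * B ≤ 2 * μ * (ε - Vbar) * ‖lam (s'+1)‖ :=
              mul_le_mul_of_nonneg_left hlt.le (by positivity)
            have hBe2 : 2 * μ * ((ε - Vbar) * B) =
                2 * μ * (2 * G * R + R ^ 2 / (2 * α) + μ * M ^ 2 / 2) := by rw [hBe]
            have hGR := mul_nonneg (mul_nonneg hμ.le hG0) hR0
            linarith [hdr, hmul, hBe2, hGR]
          have hle2 : ‖lam (s'+2)‖ ≤ ‖lam (s'+1)‖ := by
            have h' := Real.sqrt_le_sqrt hsq2
            rwa [Real.sqrt_sq (norm_nonneg _), Real.sqrt_sq (norm_nonneg _)] at h'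
          linarith
  -- coordinatewise sum bound
  have hsum : ∀ N : ℕ, ∀ i, μ * (∑ t ∈ Icc 1 N, g t (x t) i) ≤ lam (N+1) i := by
    intro N
    induction N with
    | zero => intro i; simp [hlam1]
    | succ N ih =>
      intro i
      rw [Finset.sum_Icc_succ_top (by omega : 1 ≤ N + 1)]
      have hd := hdual (N+1) (by omega)
      have hstep' : lam (N+1) i + μ * g (N+1) (x (N+1)) i ≤ lam (N+2) i := by
        rw [hd, posProj_apply]
        refine le_trans (le_of_eq ?_) (le_max_left _ _)
        simp only [PiLp.add_apply, PiLp.smul_apply, smul_eq_mul]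
      have hih := ih i
      linarith [hih, hstep']
  have hfin : ∀ i, (∑ t ∈ Icc 1 T, g t (x t)) i ≤ (μ⁻¹ • lam (T+1)) i := by
    intro i
    have h := hsum T i
    have hsa : (∑ t ∈ Icc 1 T, g t (x t)) i = ∑ t ∈ Icc 1 T, g t (x t) i :=
      by rw [WithLp.ofLp_sum, Finset.sum_apply]
    have hwi : (μ⁻¹ • lam (T+1)) i = μ⁻¹ * lam (T+1) i := rfl
    rw [hsa, hwi]
    calc ∑ t ∈ Icc 1 T, g t (x t) i = μ⁻¹ * (μ * ∑ t ∈ Icc 1 T, g t (x t) i) := by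
          field_simp
      _ ≤ μ⁻¹ * lam (T+1) i := mul_le_mul_of_nonneg_left h (inv_nonneg.2 hμ.le)
  have hwnn : ∀ i, 0 ≤ (μ⁻¹ • lam (T+1)) i := by
    intro i
    have : (μ⁻¹ • lam (T+1)) i = μ⁻¹ * lam (T+1) i := rfl
    rw [this]
    exact mul_nonneg (inv_nonneg.2 hμ.le) (hlamnn (T+1) (by omega) i)
  calc ‖posProj (∑ t ∈ Icc 1 T, g t (x t))‖
      ≤ ‖μ⁻¹ • lam (T+1)‖ := norm_posProj_le_of_le hwnn hfin
    _ = μ⁻¹ * ‖lam (T+1)‖ := by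
        rw [norm_smul, Real.norm_eq_abs, abs_of_pos (inv_pos.2 hμ)]
    _ ≤ μ⁻¹ * (μ * M + B) :=
        mul_le_mul_of_nonneg_left (hbound (T+1) (by omega)) (inv_nonneg.2 hμ.le)
    _ = M + (2 * G * R / μ + R ^ 2 / (2 * α * μ) + M ^ 2 / 2) / (ε - Vbar) := by
        rw [hB]
        field_simp
end

section
/- Corollary 1 (fit with stepsizes α = μ = T^{−1/3}): Under the MOSP setting with ε > V̄, λ_1 = 0, and stepsizes α = μ = T^{−1/3}, the dynamic fit satisfies Fit_T := ‖[Σ_{t=1}^T g_t(x_t)]^+‖ ≤ M + (2·G·R·T^{1/3} + (R²/2)·T^{2/3} + M²/2)/(ε − V̄); in particular Fit_T is bounded by a constant (depending only on G, R, M, ε, V̄) times T^{2/3}. -/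
open scoped RealInnerProductSpace
open Finset

lemma euc_sum_apply {m : ℕ} (s : Finset ℕ) (v : ℕ → EuclideanSpace ℝ (Fin m)) (i : Fin m) :
    (∑ t ∈ s, v t) i = ∑ t ∈ s, v t i := by
  induction s using Finset.cons_induction with
  | empty => rfl
  | cons a s ha ih => rw [Finset.sum_cons, Finset.sum_cons, ← ih]; rfl

lemma euc_inner_eq {m : ℕ} (a b : EuclideanSpace ℝ (Fin m)) : ⟪a, b⟫ = ∑ i, a i * b i := by
  simp [PiLp.inner_apply, RCLike.inner_apply, conj_trivial]
  exact Finset.sum_congr rfl fun _ _ => mul_comm _ _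

lemma euc_norm_le_of_abs_le {m : ℕ} (v w : EuclideanSpace ℝ (Fin m))
    (h : ∀ i, |v i| ≤ |w i|) : ‖v‖ ≤ ‖w‖ := by
  rw [EuclideanSpace.norm_eq, EuclideanSpace.norm_eq]
  apply Real.sqrt_le_sqrt
  apply Finset.sum_le_sum
  intro i _
  simpa [Real.norm_eq_abs, sq_abs] using
    pow_le_pow_left₀ (abs_nonneg (v i)) (h i) 2

lemma euc_norm_le_sum {m : ℕ} (v : EuclideanSpace ℝ (Fin m)) (h : ∀ i, 0 ≤ v i) :
    ‖v‖ ≤ ∑ i, v i := by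
  rw [EuclideanSpace.norm_eq]
  have h1 : ∑ i, ‖v i‖ ^ 2 ≤ (∑ i, v i) ^ 2 := by
    calc ∑ i, ‖v i‖ ^ 2 = ∑ i, (v i) ^ 2 := by
          refine Finset.sum_congr rfl fun i _ => ?_
          rw [Real.norm_eq_abs, sq_abs]
      _ ≤ (∑ i, v i) ^ 2 := Finset.sum_sq_le_sq_sum_of_nonneg (fun i _ => h i)
  calc Real.sqrt (∑ i, ‖v i‖ ^ 2) ≤ Real.sqrt ((∑ i, v i) ^ 2) := Real.sqrt_le_sqrt h1
    _ = ∑ i, v i := Real.sqrt_sq (Finset.sum_nonneg fun i _ => h i)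

lemma posProj_norm_le {m : ℕ} (v : EuclideanSpace ℝ (Fin m)) : ‖posProj v‖ ≤ ‖v‖ := by
  apply euc_norm_le_of_abs_le
  intro i
  have h1 : |posProj v i| = max (v i) 0 := abs_of_nonneg (le_max_right _ _)
  rw [h1]
  exact max_le (le_abs_self _) (abs_nonneg _)

set_option maxHeartbeats 1000000 in
/-- Corollary 1 (dynamic-fit bound with stepsizes `α = μ = T^{-1/3}`). -/
theorem mosp_fit_bound_stepsize {n m : ℕ} (hm : 0 < m)
    (T : ℕ) (hT : 1 ≤ T)
    (X : Set (EuclideanSpace ℝ (Fin n))) (hXne : X.Nonempty) (hXconv : Convex ℝ X)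
    (R G M ε Vbar α μ : ℝ)
    (hR : ∀ x ∈ X, ∀ y ∈ X, ‖x - y‖ ≤ R)
    (f : ℕ → EuclideanSpace ℝ (Fin n) → ℝ)
    (hfconv : ∀ t, ConvexOn ℝ Set.univ (f t))
    (hfdiff : ∀ t, Differentiable ℝ (f t))
    (hG : ∀ t, ∀ x ∈ X, ‖gradient (f t) x‖ ≤ G)
    (g : ℕ → EuclideanSpace ℝ (Fin n) → EuclideanSpace ℝ (Fin m))
    (hgconv : ∀ t i, ConvexOn ℝ Set.univ fun x => g t x i)
    (hM : ∀ t, ∀ x ∈ X, ‖g t x‖ ≤ M)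
    (hε : 0 < ε)
    (hSlater : ∃ xt ∈ X, ∀ t, ∀ i, g t xt i ≤ -ε)
    (hVbar : 0 ≤ Vbar)
    (hvar : ∀ t, ∀ x ∈ X, ‖posProj (g (t + 1) x - g t x)‖ ≤ Vbar)
    (hεV : Vbar < ε)
    (hα : 0 < α) (hμ : 0 < μ)
    (hαT : α = (T : ℝ) ^ (-(1 / 3 : ℝ))) (hμT : μ = (T : ℝ) ^ (-(1 / 3 : ℝ)))
    (x : ℕ → EuclideanSpace ℝ (Fin n))
    (lam : ℕ → EuclideanSpace ℝ (Fin m))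
    (hx0 : x 0 ∈ X) (hlam1 : lam 1 = 0)
    (hprimal : ∀ t, 1 ≤ t → x t ∈ X ∧ ∀ z ∈ X,
      ⟪gradient (f (t - 1)) (x (t - 1)), x t - x (t - 1)⟫ + ⟪lam t, g (t - 1) (x t)⟫ +
          ‖x t - x (t - 1)‖ ^ 2 / (2 * α) ≤
        ⟪gradient (f (t - 1)) (x (t - 1)), z - x (t - 1)⟫ + ⟪lam t, g (t - 1) z⟫ +
          ‖z - x (t - 1)‖ ^ 2 / (2 * α))
    (hdual : ∀ t, 1 ≤ t → lam (t + 1) = posProj (lam t + μ • g t (x t))) :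
    ‖posProj (∑ t ∈ Icc 1 T, g t (x t))‖ ≤
      M + (2 * G * R * (T : ℝ) ^ ((1 : ℝ) / 3) + R ^ 2 / 2 * (T : ℝ) ^ ((2 : ℝ) / 3) +
        M ^ 2 / 2) / (ε - Vbar) := by
  obtain ⟨xs, hxsX, hxsS⟩ := hSlater
  have hεV' : 0 < ε - Vbar := by linarith
  have hR0 : 0 ≤ R := (norm_nonneg (x 0 - x 0)).trans (hR _ hx0 _ hx0)
  have hG0 : 0 ≤ G := (norm_nonneg _).trans (hG 0 _ hx0)
  have hM0 : 0 ≤ M := (norm_nonneg _).trans (hM 0 _ hx0)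
  have hxX : ∀ t, x t ∈ X := by
    intro t
    cases t with
    | zero => exact hx0
    | succ s => exact (hprimal (s + 1) (by omega)).1
  -- entrywise nonnegativity of the multipliers
  have hlampos : ∀ s : ℕ, ∀ i, 0 ≤ lam (s + 1) i := by
    intro s
    induction s with
    | zero => intro i; simp [hlam1]
    | succ s ih =>
      intro i
      rw [hdual (s + 1) (by omega)]
      exact le_max_right _ _
  obtain ⟨K, hK⟩ : ∃ K : ℝ, K = G * R + R ^ 2 / (2 * α) := ⟨_, rfl⟩
  have hK0 : 0 ≤ K := by
    rw [hK]
    exact add_nonneg (mul_nonneg hG0 hR0) (div_nonneg (sq_nonneg R) (by linarith))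
  obtain ⟨B, hBdef⟩ : ∃ B : ℝ, B = μ * M + (K + μ * M ^ 2 / 2) / (ε - Vbar) := ⟨_, rfl⟩
  have hB0 : 0 ≤ B := by
    rw [hBdef]
    exact add_nonneg (mul_nonneg hμ.le hM0)
      (div_nonneg (add_nonneg hK0 (by positivity)) hεV'.le)
  -- key inner-product bound
  have hkey : ∀ s : ℕ, ⟪lam (s + 1), g (s + 1) (x (s + 1))⟫ ≤
      K - (ε - Vbar) * ‖lam (s + 1)‖ := by
    intro s
    have hp := (hprimal (s + 1) (by omega)).2 xs hxsX
    simp only [Nat.add_sub_cancel] at hp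
    set L := lam (s + 1) with hL
    set D := gradient (f s) (x s) with hD
    have h1 : ⟪D, xs - x s⟫ - ⟪D, x (s + 1) - x s⟫ = ⟪D, xs - x (s + 1)⟫ := by
      rw [← inner_sub_right]
      congr 1
      abel
    have h2 : ⟪D, xs - x (s + 1)⟫ ≤ G * R := by
      calc ⟪D, xs - x (s + 1)⟫ ≤ ‖D‖ * ‖xs - x (s + 1)‖ := real_inner_le_norm _ _
        _ ≤ G * R := mul_le_mul (hG s _ (hxX s)) (hR _ hxsX _ (hxX (s + 1)))
            (norm_nonneg _) hG0
    have h3 : ‖xs - x s‖ ^ 2 / (2 * α) ≤ R ^ 2 / (2 * α) := by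
      apply div_le_div_of_nonneg_right ?_ (by linarith) |>.trans_eq rfl
      · exact pow_le_pow_left₀ (norm_nonneg _) (hR _ hxsX _ (hxX s)) 2
    have hnormsum : ‖L‖ ≤ ∑ i, L i := euc_norm_le_sum _ (hlampos s)
    have h4 : ⟪L, g s xs⟫ ≤ -(ε * ‖L‖) := by
      have h41 : ⟪L, g s xs⟫ ≤ ∑ i, L i * (-ε) := by
        rw [euc_inner_eq]
        exact Finset.sum_le_sum fun i _ =>
          mul_le_mul_of_nonneg_left (hxsS s i) (hlampos s i)
      have h42 : ∑ i, L i * (-ε) = -(ε * ∑ i, L i) := by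
        rw [← Finset.sum_mul]; ring
      have h43 : ε * ‖L‖ ≤ ε * ∑ i, L i := mul_le_mul_of_nonneg_left hnormsum hε.le
      linarith [h41, h42.le, h42.ge, h43]
    have h5 : ⟪L, g s (x (s + 1))⟫ ≤ G * R + R ^ 2 / (2 * α) + -(ε * ‖L‖) := by
      have hnn : 0 ≤ ‖x (s + 1) - x s‖ ^ 2 / (2 * α) :=
        div_nonneg (sq_nonneg _) (by linarith)
      linarith [hp, h1, h2, h3, h4, hnn]
    have h6 : ⟪L, g (s + 1) (x (s + 1)) - g s (x (s + 1))⟫ ≤ Vbar * ‖L‖ := by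
      set d := g (s + 1) (x (s + 1)) - g s (x (s + 1)) with hd
      have h61 : ⟪L, d⟫ ≤ ⟪L, posProj d⟫ := by
        rw [euc_inner_eq, euc_inner_eq]
        exact Finset.sum_le_sum fun i _ =>
          mul_le_mul_of_nonneg_left (le_max_left _ _) (hlampos s i)
      have h62 : ⟪L, posProj d⟫ ≤ ‖L‖ * ‖posProj d‖ := real_inner_le_norm _ _
      have h63 : ‖posProj d‖ ≤ Vbar := hvar s _ (hxX (s + 1))
      calc ⟪L, d⟫ ≤ ⟪L, posProj d⟫ := h61
        _ ≤ ‖L‖ * ‖posProj d‖ := h62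
        _ ≤ ‖L‖ * Vbar := mul_le_mul_of_nonneg_left h63 (norm_nonneg L)
        _ = Vbar * ‖L‖ := mul_comm _ _
    have h7 : ⟪L, g (s + 1) (x (s + 1))⟫ =
        ⟪L, g s (x (s + 1))⟫ + ⟪L, g (s + 1) (x (s + 1)) - g s (x (s + 1))⟫ := by
      rw [inner_sub_right]; ring
    have h8 : K - (ε - Vbar) * ‖L‖ = (G * R + R ^ 2 / (2 * α)) + -(ε * ‖L‖) + Vbar * ‖L‖ := by
      rw [hK]; ring
    rw [h7, h8]
    linarith
  -- bound on the multipliers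
  have hlamB : ∀ s : ℕ, ‖lam (s + 1)‖ ≤ B := by
    intro s
    induction s with
    | zero => simp [hlam1, hB0]
    | succ s ih =>
      have hgM : ‖g (s + 1) (x (s + 1))‖ ≤ M := hM _ _ (hxX (s + 1))
      have hstep : ‖lam (s + 1 + 1)‖ ≤ ‖lam (s + 1) + μ • g (s + 1) (x (s + 1))‖ := by
        rw [hdual (s + 1) (by omega)]
        exact posProj_norm_le _
      rcases le_or_gt ‖lam (s + 1)‖ ((K + μ * M ^ 2 / 2) / (ε - Vbar)) with hc | hc
      · calc ‖lam (s + 1 + 1)‖ ≤ ‖lam (s + 1) + μ • g (s + 1) (x (s + 1))‖ := hstep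
          _ ≤ ‖lam (s + 1)‖ + ‖μ • g (s + 1) (x (s + 1))‖ := norm_add_le _ _
          _ = ‖lam (s + 1)‖ + μ * ‖g (s + 1) (x (s + 1))‖ := by
              rw [norm_smul, Real.norm_eq_abs, abs_of_pos hμ]
          _ ≤ (K + μ * M ^ 2 / 2) / (ε - Vbar) + μ * M :=
              add_le_add hc (mul_le_mul_of_nonneg_left hgM hμ.le)
          _ = B := by rw [hBdef]; ring
      · have hdrift : ‖lam (s + 1 + 1)‖ ^ 2 ≤ ‖lam (s + 1)‖ ^ 2 +
            2 * μ * ⟪lam (s + 1), g (s + 1) (x (s + 1))⟫ +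
            μ ^ 2 * ‖g (s + 1) (x (s + 1))‖ ^ 2 := by
          have hsq : ‖lam (s + 1 + 1)‖ ^ 2 ≤
              ‖lam (s + 1) + μ • g (s + 1) (x (s + 1))‖ ^ 2 :=
            pow_le_pow_left₀ (norm_nonneg _) hstep 2
          have hexp : ‖lam (s + 1) + μ • g (s + 1) (x (s + 1))‖ ^ 2 =
              ‖lam (s + 1)‖ ^ 2 + 2 * μ * ⟪lam (s + 1), g (s + 1) (x (s + 1))⟫ +
              μ ^ 2 * ‖g (s + 1) (x (s + 1))‖ ^ 2 := by
            rw [norm_add_sq_real, real_inner_smul_right, norm_smul, Real.norm_eq_abs,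
              abs_of_pos hμ, mul_pow]
            ring
          linarith [hexp ▸ hsq]
        have hkeys := hkey s
        have hclow : K + μ * M ^ 2 / 2 < (ε - Vbar) * ‖lam (s + 1)‖ := by
          rw [div_lt_iff₀ hεV'] at hc
          linarith [hc]
        have hg2 : ‖g (s + 1) (x (s + 1))‖ ^ 2 ≤ M ^ 2 :=
          pow_le_pow_left₀ (norm_nonneg _) hgM 2
        have e1 : 2 * μ * ⟪lam (s + 1), g (s + 1) (x (s + 1))⟫ ≤
            2 * μ * (K - (ε - Vbar) * ‖lam (s + 1)‖) :=
          mul_le_mul_of_nonneg_left hkeys (by positivity)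
        have e2 : μ ^ 2 * ‖g (s + 1) (x (s + 1))‖ ^ 2 ≤ μ ^ 2 * M ^ 2 :=
          mul_le_mul_of_nonneg_left hg2 (sq_nonneg μ)
        have e3 : μ * (K + μ * M ^ 2 / 2) < μ * ((ε - Vbar) * ‖lam (s + 1)‖) :=
          mul_lt_mul_of_pos_left hclow hμ
        have hdrift2 : ‖lam (s + 1 + 1)‖ ^ 2 ≤ ‖lam (s + 1)‖ ^ 2 +
            2 * μ * (K - (ε - Vbar) * ‖lam (s + 1)‖) + μ ^ 2 * M ^ 2 := by
          linarith [hdrift, e1, e2]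
        have hsq2 : ‖lam (s + 1 + 1)‖ ^ 2 ≤ ‖lam (s + 1)‖ ^ 2 := by linarith [hdrift2, e3]
        have hle : ‖lam (s + 1 + 1)‖ ≤ ‖lam (s + 1)‖ :=
          (pow_le_pow_iff_left₀ (norm_nonneg _) (norm_nonneg _) (by norm_num)).mp hsq2
        linarith [ih]
  -- entrywise lower bound of the multipliers by the running constraint sum
  have hsum : ∀ s : ℕ, ∀ i, μ * ((∑ t ∈ Icc 1 s, g t (x t)) i) ≤ lam (s + 1) i := by
    intro s
    induction s with
    | zero => intro i; simp [hlam1]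
    | succ s ih =>
      intro i
      have hss : (∑ t ∈ Icc 1 (s + 1), g t (x t)) =
          (∑ t ∈ Icc 1 s, g t (x t)) + g (s + 1) (x (s + 1)) :=
        Finset.sum_Icc_succ_top (by omega) _
      have h1 : μ * ((∑ t ∈ Icc 1 (s + 1), g t (x t)) i) =
          μ * ((∑ t ∈ Icc 1 s, g t (x t)) i) + μ * g (s + 1) (x (s + 1)) i := by
        rw [euc_sum_apply, euc_sum_apply,
          Finset.sum_Icc_succ_top (by omega : 1 ≤ s + 1) (fun t => g t (x t) i)]
        ring
      rw [h1, hdual (s + 1) (by omega)]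
      have h2 : lam (s + 1) i + μ * g (s + 1) (x (s + 1)) i ≤
          posProj (lam (s + 1) + μ • g (s + 1) (x (s + 1))) i := by
        have : (lam (s + 1) + μ • g (s + 1) (x (s + 1))) i =
            lam (s + 1) i + μ * g (s + 1) (x (s + 1)) i := rfl
        exact this ▸ le_max_left _ _
      linarith [ih i]
  -- fit bound through the final multiplier
  have hfit : ‖posProj (∑ t ∈ Icc 1 T, g t (x t))‖ ≤ μ⁻¹ * B := by
    have hcomp : ∀ i, |posProj (∑ t ∈ Icc 1 T, g t (x t)) i| ≤ |(μ⁻¹ • lam (T + 1)) i| := by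
      intro i
      have hli : 0 ≤ μ⁻¹ * lam (T + 1) i :=
        mul_nonneg (inv_pos.mpr hμ).le (hlampos T i)
      have hS : (∑ t ∈ Icc 1 T, g t (x t)) i ≤ μ⁻¹ * lam (T + 1) i := by
        have h2 := mul_le_mul_of_nonneg_left (hsum T i) (inv_pos.mpr hμ).le
        rwa [← mul_assoc, inv_mul_cancel₀ hμ.ne', one_mul] at h2
      have hpp2 : posProj (∑ t ∈ Icc 1 T, g t (x t)) i =
          max ((∑ t ∈ Icc 1 T, g t (x t)) i) 0 := rfl
      have hsm : (μ⁻¹ • lam (T + 1)) i = μ⁻¹ * lam (T + 1) i := rfl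
      rw [hpp2, hsm, abs_of_nonneg (le_max_right _ _), abs_of_nonneg hli]
      exact max_le hS hli
    calc ‖posProj (∑ t ∈ Icc 1 T, g t (x t))‖ ≤ ‖μ⁻¹ • lam (T + 1)‖ :=
          euc_norm_le_of_abs_le _ _ hcomp
      _ = μ⁻¹ * ‖lam (T + 1)‖ := by
          rw [norm_smul, Real.norm_eq_abs, abs_of_pos (inv_pos.mpr hμ)]
      _ ≤ μ⁻¹ * B := mul_le_mul_of_nonneg_left (hlamB T) (inv_pos.mpr hμ).le
  -- final arithmetic with the chosen stepsizes
  have hT0 : (0 : ℝ) < (T : ℝ) := by exact_mod_cast Nat.lt_of_lt_of_le Nat.zero_lt_one hT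
  obtain ⟨p, hpdef⟩ : ∃ p : ℝ, p = (T : ℝ) ^ ((1 : ℝ) / 3) := ⟨_, rfl⟩
  have hp : 0 < p := by rw [hpdef]; exact Real.rpow_pos_of_pos hT0 _
  have hμp : μ = p⁻¹ := by rw [hμT, hpdef, ← Real.rpow_neg hT0.le]
  have hαp : α = p⁻¹ := by rw [hαT, hpdef, ← Real.rpow_neg hT0.le]
  have hpp : (T : ℝ) ^ ((2 : ℝ) / 3) = p * p := by
    rw [hpdef, ← Real.rpow_add hT0]; norm_num
  have hBval : μ⁻¹ * B = M + (G * R * p + R ^ 2 / 2 * (p * p) + M ^ 2 / 2) / (ε - Vbar) := by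
    rw [hBdef, hK, hμp, hαp]
    field_simp
  have hmono : (G * R * p + R ^ 2 / 2 * (p * p) + M ^ 2 / 2) / (ε - Vbar) ≤
      (2 * G * R * p + R ^ 2 / 2 * ((T : ℝ) ^ ((2 : ℝ) / 3)) + M ^ 2 / 2) / (ε - Vbar) := by
    rw [hpp]
    have hnum : G * R * p + R ^ 2 / 2 * (p * p) + M ^ 2 / 2 ≤
        2 * G * R * p + R ^ 2 / 2 * (p * p) + M ^ 2 / 2 := by
      nlinarith [mul_nonneg (mul_nonneg hG0 hR0) hp.le]
    exact div_le_div_of_nonneg_right hnum hεV'.le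
  have hfinal : ‖posProj (∑ t ∈ Icc 1 T, g t (x t))‖ ≤
      M + (2 * G * R * p + R ^ 2 / 2 * ((T : ℝ) ^ ((2 : ℝ) / 3)) + M ^ 2 / 2) / (ε - Vbar) :=
    calc ‖posProj (∑ t ∈ Icc 1 T, g t (x t))‖ ≤ μ⁻¹ * B := hfit
      _ = M + (G * R * p + R ^ 2 / 2 * (p * p) + M ^ 2 / 2) / (ε - Vbar) := hBval
      _ ≤ M + (2 * G * R * p + R ^ 2 / 2 * ((T : ℝ) ^ ((2 : ℝ) / 3)) + M ^ 2 / 2) / (ε - Vbar) := by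
          linarith [hmono]
  rwa [hpdef] at hfinal
end
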